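/- Let S > 0, T = 1, and define f(K) = A₁A₂A₃ - A₃² - A₁²A₄ with A₁ = 2S, A₂ = S[(2K+S+2)/(K+S+1)² + S], A₃ = 2S²/(K+S+1)², A₄ = S²(1-K-S)/(1+K+S). Then f(-S) = 0 and f'(-S) = 8S⁵ > 0. -/

import Mathlib

theorem hopf_routh_hurwitz_transversality (S : ℝ) (hS : 0 < S) :
    let A1 : ℝ := 2 * S
    let A2 : ℝ → ℝ := fun K => S * ((2 * K + S + 2) / (K + S + 1) ^ 2 + S)
    let A3 : ℝ → ℝ := fun K => 2 * S ^ 2 / (K + S + 1) ^ 2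
    let A4 : ℝ → ℝ := fun K => S ^ 2 * (1 - K - S) / (1 + K + S)
    let f : ℝ → ℝ := fun K => A1 * A2 K * A3 K - (A3 K) ^ 2 - A1 ^ 2 * A4 K
    f (-S) = 0 ∧ HasDerivAt f (8 * S ^ 5) (-S) ∧ 0 < 8 * S ^ 5 := by
  intro A1 A2 A3 A4 f
  have key : -S + S + 1 = 1 := by ring
  refine ⟨?_, ?_, by positivity⟩
  · simp only [f, A1, A2, A3, A4]
    rw [show (-S : ℝ) + S + 1 = 1 by ring]
    ring
  -- derivative
  have h1 : HasDerivAt (fun K : ℝ => K + S + 1) 1 (-S) := by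
    simpa using ((hasDerivAt_id (-S)).add_const S).add_const 1
  have hsq : HasDerivAt (fun K : ℝ => (K + S + 1) ^ 2) (2 * (-S + S + 1) ^ 1 * 1) (-S) :=
    h1.pow 2
  have hne : (-S + S + 1) ^ 2 ≠ 0 := by rw [key]; norm_num
  have hnum2 : HasDerivAt (fun K : ℝ => 2 * K + S + 2) 2 (-S) := by
    simpa using (((hasDerivAt_id (-S)).const_mul 2).add_const S).add_const 2
  have hA2 : HasDerivAt A2
      (S * ((2 * (-S + S + 1) ^ 2 - (2 * (-S) + S + 2) * (2 * (-S + S + 1) ^ 1 * 1)) /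
        ((-S + S + 1) ^ 2) ^ 2)) (-S) :=
    ((hnum2.div hsq hne).add_const S).const_mul S
  have hA3 : HasDerivAt A3
      ((0 * (-S + S + 1) ^ 2 - 2 * S ^ 2 * (2 * (-S + S + 1) ^ 1 * 1)) /
        ((-S + S + 1) ^ 2) ^ 2) (-S) :=
    (hasDerivAt_const (-S) (2 * S ^ 2)).div hsq hne
  have hd : HasDerivAt (fun K : ℝ => 1 + K + S) 1 (-S) := by
    simpa using (((hasDerivAt_id (-S)).const_add 1).add_const S)
  have hdne : (1 : ℝ) + (-S) + S ≠ 0 := by norm_num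
  have hnum4 : HasDerivAt (fun K : ℝ => S ^ 2 * (1 - K - S)) (S ^ 2 * (0 - 1 - 0)) (-S) := by
    exact HasDerivAt.const_mul _ (by
      simpa using (((hasDerivAt_id (-S)).const_sub 1).sub_const S))
  have hA4 : HasDerivAt A4
      ((S ^ 2 * (0 - 1 - 0) * (1 + -S + S) - S ^ 2 * (1 - -S - S) * 1) /
        (1 + -S + S) ^ 2) (-S) :=
    hnum4.div hd hdne
  have hf := (((hA2.const_mul A1).mul hA3).sub (hA3.pow 2)).sub (hA4.const_mul (A1 ^ 2))
  refine hf.congr_deriv ?_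
  simp only [A1, A2, A3, A4]
  rw [show (-S : ℝ) + S + 1 = 1 by ring]
  norm_num
  ring
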